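/- arXiv:2011.07525 — 2 statements merged into one kernel-verified Lean document; each statement's English description precedes it below -/
import Mathlib

section
/- Let f be a C¹ function on [a,b] with f′ monotonic and |f′(t)| ≥ m₁ > 0 on [a,b], and let g be a function of bounded variation on [a,b] with |g(t)| ≤ M for all t. Then |∫_a^b g(t)·e^{i f(t)} dt| ≤ C·(1/m₁)·(M + ∫_a^b |g′(t)| dt) for some absolute constant C. -/
open Set MeasureTheory intervalIntegral

lemma osc_key (a b K : ℝ) (hab : a ≤ b) (φ : ℝ → ℝ) (hmono : Monotone φ)
    (hcont : Continuous φ) (hK : ∀ t, |φ t| ≤ K)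
    (F G : ℝ → ℂ) (hFc : ContinuousOn F (Set.Icc a b))
    (hF : ∀ t ∈ Set.Ioo a b, HasDerivAt F (G t) t)
    (hG : Continuous G)
    (hFb : ∀ t ∈ Set.Icc a b, ‖F t‖ ≤ 1) :
    ‖∫ t in a..b, φ t • G t‖ ≤ 6 * K := by
  have hK0 : 0 ≤ K := le_trans (abs_nonneg _) (hK a)
  set S : StieltjesFunction ℝ := ⟨φ, hmono, fun x => hcont.continuousAt.continuousWithinAt⟩ with hS
  set μ := S.measure with hμ
  have hμIoc : ∀ s t : ℝ, μ (Set.Ioc s t) = ENNReal.ofReal (φ t - φ s) := fun s t =>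
    S.measure_Ioc s t
  -- FTC on subintervals
  have hFTC : ∀ s ∈ Set.Icc a b, (∫ t in s..b, G t) = F b - F s := by
    intro s hs
    exact integral_eq_sub_of_hasDeriv_right_of_le hs.2
      (hFc.mono (Set.Icc_subset_Icc_left hs.1))
      (fun t ht => (hF t ⟨lt_of_le_of_lt hs.1 ht.1, ht.2⟩).hasDerivWithinAt)
      (hG.intervalIntegrable s b)
  have hφrep : ∀ t, a ≤ t → (μ (Set.Ioc a t)).toReal = φ t - φ a := by
    intro t ht
    rw [hμIoc, ENNReal.toReal_ofReal (sub_nonneg.2 (hmono ht))]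
  -- split the integral
  have hint1 : IntervalIntegrable (fun t => φ a • G t) volume a b :=
    ((hG.const_smul (φ a) : Continuous fun t => φ a • G t)).intervalIntegrable a b
  have hint2 : IntervalIntegrable (fun t => (φ t - φ a) • G t) volume a b :=
    (((hcont.sub continuous_const).smul hG)).intervalIntegrable a b
  have hsplit : (∫ t in a..b, φ t • G t)
      = φ a • (∫ t in a..b, G t) + ∫ t in a..b, (φ t - φ a) • G t := by
    rw [← intervalIntegral.integral_smul, ← intervalIntegral.integral_add hint1 hint2]
    apply intervalIntegral.integral_congr
    intro t _
    show φ t • G t = φ a • G t + (φ t - φ a) • G t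
    rw [← add_smul]
    norm_num
  -- the first term
  have hfirst : ‖φ a • (∫ t in a..b, G t)‖ ≤ 2 * K := by
    rw [hFTC a ⟨le_refl a, hab⟩, norm_smul]
    have h1 : ‖F b - F a‖ ≤ 2 := by
      calc ‖F b - F a‖ ≤ ‖F b‖ + ‖F a‖ := norm_sub_le _ _
      _ ≤ 1 + 1 := add_le_add (hFb b ⟨hab, le_refl b⟩) (hFb a ⟨le_refl a, hab⟩)
      _ = 2 := by norm_num
    calc ‖φ a‖ * ‖F b - F a‖ ≤ K * 2 :=
        mul_le_mul (hK a) h1 (norm_nonneg _) hK0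
    _ = 2 * K := by ring
  -- the second term, via Fubini against the Stieltjes measure
  set ν₁ := volume.restrict (Set.Ioc a b) with hν₁
  set ν₂ := μ.restrict (Set.Ioc a b) with hν₂
  haveI : IsFiniteMeasure ν₂ := by
    constructor
    rw [hν₂, Measure.restrict_apply_univ, hμIoc]
    exact ENNReal.ofReal_lt_top
  haveI : IsFiniteMeasure ν₁ := by
    constructor
    rw [hν₁, Measure.restrict_apply_univ, Real.volume_Ioc]
    exact ENNReal.ofReal_lt_top
  obtain ⟨CG, hCG⟩ := (isCompact_Icc (a := a) (b := b)).exists_bound_of_continuousOn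
    hG.continuousOn
  -- integrability for Fubini
  set Φ : ℝ → ℝ → ℂ := fun t s => (Set.Ioc a t).indicator (fun _ => (1:ℝ)) s • G t with hΦ
  have hA : MeasurableSet {p : ℝ × ℝ | a < p.2 ∧ p.2 ≤ p.1} :=
    ((measurableSet_lt measurable_const measurable_snd).inter
      (measurableSet_le measurable_snd measurable_fst))
  have huncurry : Function.uncurry Φ
      = Set.indicator {p : ℝ × ℝ | a < p.2 ∧ p.2 ≤ p.1} (fun p => G p.1) := by
    funext p
    by_cases hp : a < p.2 ∧ p.2 ≤ p.1
    · simp [Function.uncurry, hΦ, Set.indicator, hp, Set.mem_Ioc, hp.1, hp.2]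
    · simp [Function.uncurry, hΦ, Set.indicator, Set.mem_Ioc, Set.mem_setOf_eq, hp]
  have hΦint : Integrable (Function.uncurry Φ) (ν₁.prod ν₂) := by
    have hmeas : AEStronglyMeasurable (Function.uncurry Φ) (ν₁.prod ν₂) := by
      rw [huncurry]
      exact (((hG.comp continuous_fst).stronglyMeasurable).indicator hA).aestronglyMeasurable
    have hprod : ν₁.prod ν₂ = (volume.prod μ).restrict ((Set.Ioc a b) ×ˢ (Set.Ioc a b)) :=
      Measure.prod_restrict _ _
    have hae : ∀ᵐ p ∂(ν₁.prod ν₂), p ∈ (Set.Ioc a b) ×ˢ (Set.Ioc a b) := by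
      rw [hprod]
      exact ae_restrict_mem (measurableSet_Ioc.prod measurableSet_Ioc)
    refine (integrable_const CG).mono' hmeas ?_
    filter_upwards [hae] with p hp
    rw [huncurry]
    calc ‖Set.indicator {p : ℝ × ℝ | a < p.2 ∧ p.2 ≤ p.1} (fun p => G p.1) p‖
        ≤ ‖G p.1‖ := norm_indicator_le_norm_self _ _
    _ ≤ CG := hCG p.1 (Set.Ioc_subset_Icc_self hp.1)
  have hT : (∫ t in a..b, (φ t - φ a) • G t) = ∫ s in Set.Ioc a b, (F b - F s) ∂μ := by
    rw [intervalIntegral.integral_of_le hab]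
    have step1 : (∫ t in Set.Ioc a b, (φ t - φ a) • G t)
        = ∫ t in Set.Ioc a b, (∫ s in Set.Ioc a b, Φ t s ∂μ) := by
      apply setIntegral_congr_fun measurableSet_Ioc
      intro t ht
      show (φ t - φ a) • G t = ∫ s in Set.Ioc a b, Φ t s ∂μ
      rw [hΦ]
      rw [_root_.integral_smul_const]
      congr 1
      rw [MeasureTheory.setIntegral_indicator measurableSet_Ioc,
        Set.inter_eq_self_of_subset_right (Set.Ioc_subset_Ioc_right ht.2),
        MeasureTheory.setIntegral_const]
      simp [Measure.real, hφrep t ht.1.le]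
    have step2 : (∫ t in Set.Ioc a b, (∫ s in Set.Ioc a b, Φ t s ∂μ))
        = ∫ s in Set.Ioc a b, (∫ t in Set.Ioc a b, Φ t s) ∂μ :=
      MeasureTheory.integral_integral_swap hΦint
    have step3 : (∫ s in Set.Ioc a b, (∫ t in Set.Ioc a b, Φ t s) ∂μ)
        = ∫ s in Set.Ioc a b, (F b - F s) ∂μ := by
      apply setIntegral_congr_fun measurableSet_Ioc
      intro s hs
      show (∫ t in Set.Ioc a b, Φ t s) = F b - F s
      have heq : (fun t => Φ t s) = fun t => (Set.Ici s).indicator G t := by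
        funext t
        by_cases hst : s ≤ t
        · simp [hΦ, Set.indicator, Set.mem_Ioc, hs.1, hst]
        · simp [hΦ, Set.indicator, Set.mem_Ioc, hst]
      rw [heq, MeasureTheory.setIntegral_indicator measurableSet_Ici]
      have hset : Set.Ioc a b ∩ Set.Ici s = Set.Icc s b := by
        ext t
        simp only [Set.mem_inter_iff, Set.mem_Ioc, Set.mem_Ici, Set.mem_Icc]
        constructor
        · rintro ⟨⟨_, h2⟩, h3⟩; exact ⟨h3, h2⟩
        · rintro ⟨h1, h2⟩; exact ⟨⟨lt_of_lt_of_le hs.1 h1, h2⟩, h1⟩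
      rw [hset, MeasureTheory.integral_Icc_eq_integral_Ioc,
        ← intervalIntegral.integral_of_le hs.2]
      exact hFTC s ⟨hs.1.le, hs.2⟩
    rw [step1, step2, step3]
  have hsecond : ‖∫ t in a..b, (φ t - φ a) • G t‖ ≤ 4 * K := by
    rw [hT]
    have hb1 : ‖∫ s in Set.Ioc a b, (F b - F s) ∂μ‖ ≤ 2 * (μ (Set.Ioc a b)).toReal := by
      apply MeasureTheory.norm_setIntegral_le_of_norm_le_const
      · rw [hμIoc]; exact ENNReal.ofReal_lt_top
      · intro s hs
        calc ‖F b - F s‖ ≤ ‖F b‖ + ‖F s‖ := norm_sub_le _ _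
        _ ≤ 1 + 1 := add_le_add (hFb b ⟨hab, le_refl b⟩) (hFb s (Set.Ioc_subset_Icc_self hs))
        _ = 2 := by norm_num
    calc ‖∫ s in Set.Ioc a b, (F b - F s) ∂μ‖ ≤ 2 * (μ (Set.Ioc a b)).toReal := hb1
    _ = 2 * (φ b - φ a) := by rw [hφrep b hab]
    _ ≤ 2 * (|φ b| + |φ a|) := by
        have := abs_nonneg (φ b)
        nlinarith [le_abs_self (φ b), neg_abs_le (φ a)]
    _ ≤ 2 * (K + K) := by nlinarith [hK a, hK b]
    _ = 4 * K := by ring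
  calc ‖∫ t in a..b, φ t • G t‖
      ≤ ‖φ a • (∫ t in a..b, G t)‖ + ‖∫ t in a..b, (φ t - φ a) • G t‖ := by
        rw [hsplit]; exact norm_add_le _ _
  _ ≤ 2 * K + 4 * K := add_le_add hfirst hsecond
  _ = 6 * K := by ring

lemma osc_key2 (a b K : ℝ) (hab : a ≤ b) (φ : ℝ → ℝ) (hφ : Monotone φ ∨ Antitone φ)
    (hcont : Continuous φ) (hK : ∀ t, |φ t| ≤ K)
    (F G : ℝ → ℂ) (hFc : ContinuousOn F (Set.Icc a b))
    (hF : ∀ t ∈ Set.Ioo a b, HasDerivAt F (G t) t)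
    (hG : Continuous G)
    (hFb : ∀ t ∈ Set.Icc a b, ‖F t‖ ≤ 1) :
    ‖∫ t in a..b, φ t • G t‖ ≤ 6 * K := by
  rcases hφ with h | h
  · exact osc_key a b K hab φ h hcont hK F G hFc hF hG hFb
  · have h2 := osc_key a b K hab (fun t => -φ t) (fun s t hst => neg_le_neg (h hst))
      hcont.neg (fun t => by rw [abs_neg]; exact hK t) F G hFc hF hG hFb
    have h3 : (∫ t in a..b, (fun t => -φ t) t • G t) = -∫ t in a..b, φ t • G t := by
      rw [← intervalIntegral.integral_neg]
      apply intervalIntegral.integral_congr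
      intro t _
      simp [neg_smul]
    rw [h3, norm_neg] at h2
    exact h2

lemma sign_dichotomy (a b m₁ : ℝ) (f' : ℝ → ℝ) (hm : 0 < m₁)
    (hf' : ContinuousOn f' (Set.Icc a b)) (hlow : ∀ t ∈ Set.Icc a b, m₁ ≤ |f' t|) :
    (∀ t ∈ Set.Icc a b, 0 < f' t) ∨ (∀ t ∈ Set.Icc a b, f' t < 0) := by
  by_contra hcon
  push_neg at hcon
  obtain ⟨⟨x, hx, hx0⟩, ⟨y, hy, hy0⟩⟩ := hcon
  have hsub : Set.uIcc x y ⊆ Set.Icc a b := by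
    rw [Set.uIcc]
    exact Set.Icc_subset_Icc (le_inf hx.1 hy.1) (sup_le hx.2 hy.2)
  have h0 : (0:ℝ) ∈ Set.uIcc (f' x) (f' y) := Set.mem_uIcc.2 (Or.inl ⟨hx0, hy0⟩)
  obtain ⟨z, hz, hz0⟩ := intermediate_value_uIcc (hf'.mono hsub) h0
  have := hlow z (hsub hz)
  rw [hz0] at this
  simp at this
  linarith

lemma osc_core (a b m₁ : ℝ) (f f' : ℝ → ℝ) (hab : a ≤ b) (hm : 0 < m₁)
    (hf : ∀ t ∈ Set.Icc a b, HasDerivAt f (f' t) t)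
    (hf' : ContinuousOn f' (Set.Icc a b))
    (hmono : MonotoneOn f' (Set.Icc a b) ∨ AntitoneOn f' (Set.Icc a b))
    (hlow : ∀ t ∈ Set.Icc a b, m₁ ≤ |f' t|) :
    ‖∫ t in a..b, Complex.exp (Complex.I * (f t : ℂ))‖ ≤ 6 * (1 / m₁) := by
  -- the clamping function
  set c : ℝ → ℝ := fun t => max a (min t b) with hc
  have hcmem : ∀ t, c t ∈ Set.Icc a b := fun t =>
    ⟨le_max_left _ _, max_le hab (min_le_right _ _)⟩
  have hcid : ∀ t ∈ Set.Icc a b, c t = t := by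
    intro t ht
    rw [hc]
    simp only [min_eq_left ht.2, max_eq_right ht.1]
  have hcmono : Monotone c := fun s t hst =>
    max_le_max le_rfl (min_le_min hst le_rfl)
  have hccont : Continuous c := continuous_const.max (continuous_id.min continuous_const)
  have hfc : ContinuousOn f (Set.Icc a b) := fun t ht =>
    (hf t ht).continuousAt.continuousWithinAt
  have hf'c : Continuous (fun t => f' (c t)) :=
    hf'.comp_continuous hccont hcmem
  have hfcc : Continuous (fun t => f (c t)) := hfc.comp_continuous hccont hcmem
  have hne : ∀ t ∈ Set.Icc a b, f' t ≠ 0 := by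
    intro t ht h0
    have := hlow t ht
    rw [h0] at this
    simp at this
    linarith
  -- the amplitude
  set φ : ℝ → ℝ := fun t => (f' (c t))⁻¹ with hφ
  have hφcont : Continuous φ := hf'c.inv₀ (fun t => hne _ (hcmem t))
  have hφbound : ∀ t, |φ t| ≤ 1 / m₁ := by
    intro t
    rw [hφ]
    simp only [abs_inv]
    rw [one_div]
    exact inv_anti₀ hm (hlow _ (hcmem t))
  have hsign := sign_dichotomy a b m₁ f' hm hf' hlow
  have hφmono : Monotone φ ∨ Antitone φ := by
    rcases hsign with hpos | hneg
    · rcases hmono with hmon | hant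
      · right
        intro s t hst
        have h1 : f' (c s) ≤ f' (c t) := hmon (hcmem s) (hcmem t) (hcmono hst)
        show (f' (c t))⁻¹ ≤ (f' (c s))⁻¹
        rw [← one_div, ← one_div]
        exact one_div_le_one_div_of_le (hpos _ (hcmem s)) h1
      · left
        intro s t hst
        have h1 : f' (c t) ≤ f' (c s) := hant (hcmem s) (hcmem t) (hcmono hst)
        show (f' (c s))⁻¹ ≤ (f' (c t))⁻¹
        rw [← one_div, ← one_div]
        exact one_div_le_one_div_of_le (hpos _ (hcmem t)) h1
    · rcases hmono with hmon | hant
      · right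
        intro s t hst
        have h1 : f' (c s) ≤ f' (c t) := hmon (hcmem s) (hcmem t) (hcmono hst)
        show (f' (c t))⁻¹ ≤ (f' (c s))⁻¹
        have h2 : (0:ℝ) < -f' (c t) := by linarith [hneg _ (hcmem t)]
        have h3 : -f' (c t) ≤ -f' (c s) := by linarith
        have := one_div_le_one_div_of_le h2 h3
        rw [one_div_neg_eq_neg_one_div, one_div_neg_eq_neg_one_div] at this
        rw [← one_div, ← one_div]
        linarith
      · left
        intro s t hst
        have h1 : f' (c t) ≤ f' (c s) := hant (hcmem s) (hcmem t) (hcmono hst)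
        show (f' (c s))⁻¹ ≤ (f' (c t))⁻¹
        have h2 : (0:ℝ) < -f' (c s) := by linarith [hneg _ (hcmem s)]
        have h3 : -f' (c s) ≤ -f' (c t) := by linarith
        have := one_div_le_one_div_of_le h2 h3
        rw [one_div_neg_eq_neg_one_div, one_div_neg_eq_neg_one_div] at this
        rw [← one_div, ← one_div]
        linarith
  -- phase functions
  set F : ℝ → ℂ := fun t => -Complex.I * Complex.exp (Complex.I * (f t : ℂ)) with hF
  set G : ℝ → ℂ := fun t => (f' (c t) : ℂ) * Complex.exp (Complex.I * (f (c t) : ℂ)) with hG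
  have hGcont : Continuous G := by
    apply Continuous.mul
    · exact Complex.continuous_ofReal.comp hf'c
    · exact Complex.continuous_exp.comp (continuous_const.mul
        (Complex.continuous_ofReal.comp hfcc))
  have hFcont : ContinuousOn F (Set.Icc a b) := by
    apply ContinuousOn.mul continuousOn_const
    exact Complex.continuous_exp.comp_continuousOn
      (continuousOn_const.mul (Complex.continuous_ofReal.comp_continuousOn hfc))
  have hFderiv : ∀ t ∈ Set.Ioo a b, HasDerivAt F (G t) t := by
    intro t ht
    have h1 : HasDerivAt (fun u => Complex.I * (f u : ℂ)) (Complex.I * (f' t : ℂ)) t :=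
      ((hf t (Set.Ioo_subset_Icc_self ht)).ofReal_comp).const_mul Complex.I
    have h2 := h1.cexp
    have h3 := h2.const_mul (-Complex.I)
    have hct : c t = t := hcid t (Set.Ioo_subset_Icc_self ht)
    convert h3 using 1
    · rfl
    rw [hG]
    simp only [hct]
    linear_combination ((f' t : ℂ) * Complex.exp (Complex.I * (f t:ℂ))) * Complex.I_mul_I
  have hFnorm : ∀ t ∈ Set.Icc a b, ‖F t‖ ≤ 1 := by
    intro t _
    rw [hF]
    simp only [norm_mul, norm_neg, Complex.norm_I, one_mul]
    rw [mul_comm Complex.I]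
    rw [Complex.norm_exp_ofReal_mul_I]
  have hcongr : (∫ t in a..b, Complex.exp (Complex.I * (f t : ℂ)))
      = ∫ t in a..b, φ t • G t := by
    apply intervalIntegral.integral_congr
    intro t ht
    rw [Set.uIcc_of_le hab] at ht
    have hct : c t = t := hcid t ht
    rw [hφ, hG]
    simp only [hct]
    rw [Complex.real_smul, Complex.ofReal_inv]
    rw [← mul_assoc, inv_mul_cancel₀ (by exact_mod_cast hne t ht), one_mul]
  rw [hcongr]
  exact osc_key2 a b (1 / m₁) hab φ hφmono hφcont hφbound F G hFcont hFderiv hGcont hFnorm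


/-- First-derivative test for oscillatory integrals: if `f` is C¹ on `[a,b]` with `f'`
monotonic and `|f'| ≥ m₁ > 0`, and `g` is C¹ (hence of bounded variation) with `‖g‖ ≤ M`,
then `|∫_a^b g(t) e^{i f(t)} dt| ≤ C (1/m₁) (M + ∫_a^b |g'(t)| dt)` for an absolute
constant `C`. -/
theorem first_derivative_test :
    ∃ C : ℝ, 0 < C ∧ ∀ (a b m₁ M : ℝ) (f f' : ℝ → ℝ) (g g' : ℝ → ℂ),
      a < b → 0 < m₁ →
      (∀ t ∈ Set.Icc a b, HasDerivAt f (f' t) t) →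
      ContinuousOn f' (Set.Icc a b) →
      (MonotoneOn f' (Set.Icc a b) ∨ AntitoneOn f' (Set.Icc a b)) →
      (∀ t ∈ Set.Icc a b, m₁ ≤ |f' t|) →
      (∀ t ∈ Set.Icc a b, HasDerivAt g (g' t) t) →
      ContinuousOn g' (Set.Icc a b) →
      (∀ t ∈ Set.Icc a b, ‖g t‖ ≤ M) →
      ‖∫ t in a..b, g t * Complex.exp (Complex.I * (f t : ℂ))‖ ≤
        C * (1 / m₁) * (M + ∫ t in a..b, ‖g' t‖) := by
  refine ⟨6, by norm_num, ?_⟩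
  intro a b m₁ M f f' g g' hab hm hf hf' hmono hlow hg hg' hgM
  have hab' : a ≤ b := hab.le
  set e : ℝ → ℂ := fun s => Complex.exp (Complex.I * (f s : ℂ)) with he
  have hfc : ContinuousOn f (Set.Icc a b) := fun t ht =>
    (hf t ht).continuousAt.continuousWithinAt
  have hec : ContinuousOn e (Set.Icc a b) :=
    Complex.continuous_exp.comp_continuousOn
      (continuousOn_const.mul (Complex.continuous_ofReal.comp_continuousOn hfc))
  have hgc : ContinuousOn g (Set.Icc a b) := fun t ht =>
    (hg t ht).continuousAt.continuousWithinAt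
  set E : ℝ → ℂ := fun u => ∫ s in a..u, e s with hE
  -- continuity of the primitive
  have hEc : ContinuousOn E (Set.Icc a b) := by
    rw [← Set.uIcc_of_le hab']
    apply intervalIntegral.continuousOn_primitive_interval
    rw [Set.uIcc_of_le hab']
    exact hec.integrableOn_Icc
  -- derivative of the primitive on the interior
  have hEd : ∀ t ∈ Set.Ioo a b, HasDerivAt E (e t) t := by
    intro t ht
    apply intervalIntegral.integral_hasDerivAt_right
    · apply ContinuousOn.intervalIntegrable
      rw [Set.uIcc_of_le ht.1.le]
      exact hec.mono (Set.Icc_subset_Icc le_rfl ht.2.le)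
    · exact (hec.mono Set.Ioo_subset_Icc_self).stronglyMeasurableAtFilter isOpen_Ioo t ht
    · exact (hec.continuousAt (Icc_mem_nhds ht.1 ht.2))
  -- bound on the primitive from the core estimate
  have hEb : ∀ u ∈ Set.Icc a b, ‖E u‖ ≤ 6 * (1 / m₁) := by
    intro u hu
    have hsub : Set.Icc a u ⊆ Set.Icc a b := Set.Icc_subset_Icc le_rfl hu.2
    apply osc_core a u m₁ f f' hu.1 hm (fun t ht => hf t (hsub ht)) (hf'.mono hsub)
      ?_ (fun t ht => hlow t (hsub ht))
    rcases hmono with h | h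
    · exact Or.inl (h.mono hsub)
    · exact Or.inr (h.mono hsub)
  -- integration by parts
  have hprod : ∀ t ∈ Set.Ioo a b, HasDerivAt (fun u => g u * E u) (g' t * E t + g t * e t) t :=
    fun t ht => (hg t (Set.Ioo_subset_Icc_self ht)).mul (hEd t ht)
  have hintd : IntervalIntegrable (fun t => g' t * E t + g t * e t) volume a b := by
    apply ContinuousOn.intervalIntegrable
    rw [Set.uIcc_of_le hab']
    exact (hg'.mul hEc).add (hgc.mul hec)
  have hFTC : (∫ t in a..b, (g' t * E t + g t * e t)) = g b * E b - g a * E a :=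
    intervalIntegral.integral_eq_sub_of_hasDeriv_right_of_le hab'
      (hgc.mul hEc) (fun t ht => (hprod t ht).hasDerivWithinAt) hintd
  have hEa : E a = 0 := intervalIntegral.integral_same
  have hint1 : IntervalIntegrable (fun t => g' t * E t) volume a b := by
    apply ContinuousOn.intervalIntegrable
    rw [Set.uIcc_of_le hab']
    exact hg'.mul hEc
  have hint2 : IntervalIntegrable (fun t => g t * e t) volume a b := by
    apply ContinuousOn.intervalIntegrable
    rw [Set.uIcc_of_le hab']
    exact hgc.mul hec
  have hsplit : (∫ t in a..b, g t * e t) = g b * E b - ∫ t in a..b, g' t * E t := by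
    have := intervalIntegral.integral_add hint1 hint2
    rw [hFTC, hEa, mul_zero, sub_zero] at this
    linear_combination -this
  -- bounds
  have hM0 : 0 ≤ M := le_trans (norm_nonneg _) (hgM a ⟨le_rfl, hab'⟩)
  have hfirst : ‖g b * E b‖ ≤ M * (6 * (1 / m₁)) := by
    rw [norm_mul]
    exact mul_le_mul (hgM b ⟨hab', le_rfl⟩) (hEb b ⟨hab', le_rfl⟩) (norm_nonneg _) hM0
  have hsecond : ‖∫ t in a..b, g' t * E t‖ ≤ (∫ t in a..b, ‖g' t‖) * (6 * (1 / m₁)) := by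
    have h1 : ‖∫ t in a..b, g' t * E t‖ ≤ ∫ t in a..b, ‖g' t * E t‖ :=
      intervalIntegral.norm_integral_le_integral_norm hab'
    have h2 : (∫ t in a..b, ‖g' t * E t‖) ≤ ∫ t in a..b, ‖g' t‖ * (6 * (1 / m₁)) := by
      apply intervalIntegral.integral_mono_on hab'
      · apply ContinuousOn.intervalIntegrable
        rw [Set.uIcc_of_le hab']
        exact (hg'.mul hEc).norm
      · apply ContinuousOn.intervalIntegrable
        rw [Set.uIcc_of_le hab']
        exact hg'.norm.mul continuousOn_const
      · intro t ht
        rw [norm_mul]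
        exact mul_le_mul_of_nonneg_left (hEb t ht) (norm_nonneg _)
    calc ‖∫ t in a..b, g' t * E t‖ ≤ ∫ t in a..b, ‖g' t‖ * (6 * (1 / m₁)) := h1.trans h2
    _ = (∫ t in a..b, ‖g' t‖) * (6 * (1 / m₁)) := intervalIntegral.integral_mul_const _ _
  calc ‖∫ t in a..b, g t * Complex.exp (Complex.I * (f t : ℂ))‖
      = ‖g b * E b - ∫ t in a..b, g' t * E t‖ := by rw [← hsplit]
  _ ≤ ‖g b * E b‖ + ‖∫ t in a..b, g' t * E t‖ := norm_sub_le _ _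
  _ ≤ M * (6 * (1 / m₁)) + (∫ t in a..b, ‖g' t‖) * (6 * (1 / m₁)) := add_le_add hfirst hsecond
  _ = 6 * (1 / m₁) * (M + ∫ t in a..b, ‖g' t‖) := by ring
end

section
/- Let α ≥ 1, T > 0, and n ≥ 1 an integer, and define I_n = (1/2πi) ∫_{4παT}^{6παT} e^{i f(t)} dt where f(t) = t·log(t/(2πe·α·n)) − π/4. If n ≤ T or n ≥ 4T, then I_n = O(1), with an implied constant independent of n, α, and T. -/
open Set intervalIntegral MeasureTheory

noncomputable def psf (c t : ℝ) : ℝ := Real.log (t / c)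
noncomputable def phf (c t : ℝ) : ℝ := t * Real.log (t / (Real.exp 1 * c)) - Real.pi / 4
noncomputable def Ff (c t : ℝ) : ℂ := Complex.exp (Complex.I * phf c t) / (Complex.I * psf c t)
noncomputable def Gf (c t : ℝ) : ℂ :=
  Complex.exp (Complex.I * phf c t) * (Complex.I * (t⁻¹ : ℝ)) / (Complex.I * (psf c t : ℝ)) ^ 2

lemma hasDerivAt_psf {c t : ℝ} (hc : c ≠ 0) (ht : t ≠ 0) :
    HasDerivAt (psf c) t⁻¹ t := by
  have h := (Real.hasDerivAt_log (div_ne_zero ht hc)).comp t ((hasDerivAt_id t).div_const c)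
  refine h.congr_deriv ?_
  field_simp

lemma hasDerivAt_phf {c t : ℝ} (hc : 0 < c) (ht : 0 < t) :
    HasDerivAt (phf c) (psf c t) t := by
  have hec : (Real.exp 1 * c) ≠ 0 := by positivity
  have h1 : HasDerivAt (fun t : ℝ => Real.log (t / (Real.exp 1 * c))) t⁻¹ t :=
    hasDerivAt_psf hec ht.ne'
  have h2 := ((hasDerivAt_id t).mul h1).sub_const (Real.pi / 4)
  refine h2.congr_deriv ?_
  unfold psf
  rw [Real.log_div ht.ne' hc.ne', Real.log_div ht.ne' hec,
    Real.log_mul (Real.exp_ne_zero 1) hc.ne', Real.log_exp]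
  simp only [id_eq]
  rw [mul_inv_cancel₀ ht.ne']
  ring

lemma abs_exp_I_real (r : ℝ) : ‖Complex.exp (Complex.I * r)‖ = 1 := by
  rw [Complex.norm_exp]; simp

lemma osc_key_s10 (c a b : ℝ) (hc : 0 < c) (ha : 0 < a) (hab : a ≤ b)
    (hsgn : (∀ t ∈ Set.Icc a b, Real.log (4/3) ≤ Real.log (t/c)) ∨
            (∀ t ∈ Set.Icc a b, Real.log (t/c) ≤ -Real.log (4/3))) :
    ‖∫ t in a..b, Complex.exp (Complex.I *
        ((t * Real.log (t / (Real.exp 1 * c)) - Real.pi / 4 : ℝ) : ℂ))‖ ≤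
      3 / Real.log (4/3) := by
  have hL : 0 < Real.log (4/3) := Real.log_pos (by norm_num)
  set L := Real.log (4/3) with hLdef
  have hpos : ∀ t ∈ Icc a b, (0:ℝ) < t := fun t ht => lt_of_lt_of_le ha ht.1
  have hψne : ∀ t ∈ Icc a b, psf c t ≠ 0 := by
    intro t ht
    rcases hsgn with h | h
    · exact (lt_of_lt_of_le hL (h t ht)).ne'
    · exact (lt_of_le_of_lt (h t ht) (by linarith)).ne
  have hψabs : ∀ t ∈ Icc a b, L ≤ |psf c t| := by
    intro t ht
    simp only [psf]
    rcases hsgn with h | h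
    · rw [abs_of_pos (lt_of_lt_of_le hL (h t ht))]; exact h t ht
    · rw [abs_of_neg (lt_of_le_of_lt (h t ht) (by linarith))]; linarith [h t ht]
  -- derivative facts
  have hexp : ∀ t ∈ Icc a b, HasDerivAt (fun t => Complex.exp (Complex.I * (phf c t : ℂ)))
      (Complex.exp (Complex.I * phf c t) * (Complex.I * psf c t)) t := by
    intro t ht
    exact (((hasDerivAt_phf hc (hpos t ht)).ofReal_comp).const_mul Complex.I).cexp
  have hden : ∀ t ∈ Icc a b, HasDerivAt (fun t => Complex.I * (psf c t : ℂ))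
      (Complex.I * ((t : ℝ)⁻¹ : ℝ)) t := by
    intro t ht
    exact ((hasDerivAt_psf hc.ne' (hpos t ht).ne').ofReal_comp).const_mul Complex.I
  have hψC : ∀ t ∈ Icc a b, (Complex.I * (psf c t : ℂ)) ≠ 0 := by
    intro t ht
    exact mul_ne_zero Complex.I_ne_zero (Complex.ofReal_ne_zero.mpr (hψne t ht))
  have hF : ∀ t ∈ Icc a b, HasDerivAt (Ff c)
      (Complex.exp (Complex.I * phf c t) - Gf c t) t := by
    intro t ht
    have h := (hexp t ht).div (hden t ht) (hψC t ht)
    refine h.congr_deriv ?_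
    have h1 : (psf c t : ℂ) ≠ 0 := Complex.ofReal_ne_zero.mpr (hψne t ht)
    have h2 : (t : ℂ) ≠ 0 := Complex.ofReal_ne_zero.mpr (hpos t ht).ne'
    unfold Gf
    field_simp
  -- continuity / integrability
  have hcψ : ∀ t ∈ Icc a b, ContinuousAt (fun t => (psf c t : ℂ)) t := by
    intro t ht
    exact Complex.continuous_ofReal.continuousAt.comp (hasDerivAt_psf hc.ne' (hpos t ht).ne').continuousAt
  have hcexp : ContinuousOn (fun t => Complex.exp (Complex.I * (phf c t : ℂ))) (Icc a b) :=
    fun t ht => ((hexp t ht).continuousAt).continuousWithinAt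
  have hcG : ContinuousOn (Gf c) (Icc a b) := by
    intro t ht
    refine ContinuousAt.continuousWithinAt ?_
    unfold Gf
    have h2 : ContinuousAt (fun t : ℝ => Complex.I * ((t⁻¹ : ℝ) : ℂ)) t := by
      exact continuousAt_const.mul (Complex.continuous_ofReal.continuousAt.comp
        (continuousAt_inv₀ (hpos t ht).ne'))
    exact (((hexp t ht).continuousAt).mul h2).div
      ((continuousAt_const.mul (hcψ t ht)).pow 2) (pow_ne_zero 2 (hψC t ht))
  have huIcc : Set.uIcc a b = Icc a b := uIcc_of_le hab
  have hInt1 : IntervalIntegrable (fun t => Complex.exp (Complex.I * (phf c t : ℂ)))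
      volume a b := (huIcc ▸ hcexp).intervalIntegrable
  have hInt2 : IntervalIntegrable (Gf c) volume a b := (huIcc ▸ hcG).intervalIntegrable
  have hFTC : ∫ t in a..b, (Complex.exp (Complex.I * (phf c t : ℂ)) - Gf c t)
      = Ff c b - Ff c a :=
    integral_eq_sub_of_hasDerivAt (fun t ht => hF t (huIcc ▸ ht)) (hInt1.sub hInt2)
  have hsplit : (∫ t in a..b, Complex.exp (Complex.I * (phf c t : ℂ)))
      = (Ff c b - Ff c a) + ∫ t in a..b, Gf c t := by
    rw [← hFTC, integral_sub hInt1 hInt2]; ring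
  -- norm bounds
  have haIcc : a ∈ Icc a b := ⟨le_refl a, hab⟩
  have hbIcc : b ∈ Icc a b := ⟨hab, le_refl b⟩
  have hFbound : ∀ t ∈ Icc a b, ‖Ff c t‖ ≤ L⁻¹ := by
    intro t ht
    unfold Ff
    rw [norm_div, abs_exp_I_real, norm_mul, Complex.norm_I, Complex.norm_real, Real.norm_eq_abs, one_mul]
    rw [one_div]
    exact inv_anti₀ hL (hψabs t ht)
  -- bound on ∫ G
  have hHder : ∀ t ∈ Icc a b, HasDerivAt (fun t => -(psf c t)⁻¹) (t⁻¹ / (psf c t) ^ 2) t := by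
    intro t ht
    have h := ((hasDerivAt_psf hc.ne' (hpos t ht).ne').inv (hψne t ht)).neg
    refine h.congr_deriv ?_
    field_simp
  have hcGR : ContinuousOn (fun t : ℝ => t⁻¹ / (psf c t) ^ 2) (Icc a b) := by
    intro t ht
    refine ContinuousAt.continuousWithinAt ?_
    exact (continuousAt_inv₀ (hpos t ht).ne').div
      (((hasDerivAt_psf hc.ne' (hpos t ht).ne').continuousAt).pow 2)
      (pow_ne_zero 2 (hψne t ht))
  have hIntR : IntervalIntegrable (fun t : ℝ => t⁻¹ / (psf c t) ^ 2) volume a b :=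
    (huIcc ▸ hcGR).intervalIntegrable
  have hFTCR : ∫ t in a..b, t⁻¹ / (psf c t) ^ 2 = (psf c a)⁻¹ - (psf c b)⁻¹ := by
    rw [integral_eq_sub_of_hasDerivAt (fun t ht => hHder t (huIcc ▸ ht)) hIntR]
    ring
  have hGnorm : ∀ t ∈ Icc a b, ‖Gf c t‖ = t⁻¹ / (psf c t) ^ 2 := by
    intro t ht
    unfold Gf
    rw [norm_div, norm_mul, abs_exp_I_real, norm_mul, Complex.norm_I,
      Complex.norm_real, Real.norm_eq_abs, norm_pow, norm_mul, Complex.norm_I, Complex.norm_real, Real.norm_eq_abs, one_mul,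
      abs_of_pos (inv_pos.mpr (hpos t ht)), one_mul, mul_pow, one_pow, one_mul, sq_abs]
  have hGint : ‖∫ t in a..b, Gf c t‖ ≤ (psf c a)⁻¹ - (psf c b)⁻¹ := by
    calc ‖∫ t in a..b, Gf c t‖ ≤ ∫ t in a..b, ‖Gf c t‖ := by
          exact intervalIntegral.norm_integral_le_integral_norm hab
      _ = ∫ t in a..b, t⁻¹ / (psf c t) ^ 2 :=
          integral_congr (fun t ht => hGnorm t (huIcc ▸ ht))
      _ = (psf c a)⁻¹ - (psf c b)⁻¹ := hFTCR
  have hRbound : (psf c a)⁻¹ - (psf c b)⁻¹ ≤ L⁻¹ := by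
    rcases hsgn with h | h
    · have h1 : (0:ℝ) < psf c b := lt_of_lt_of_le hL (h b hbIcc)
      have h2 : (psf c a)⁻¹ ≤ L⁻¹ := inv_anti₀ hL (h a haIcc)
      have h3 : 0 < (psf c b)⁻¹ := inv_pos.mpr h1
      linarith
    · have h1 : psf c a < 0 := lt_of_le_of_lt (h a haIcc) (by linarith)
      have h2 : psf c b ≤ -L := h b hbIcc
      have h3 : (psf c a)⁻¹ < 0 := inv_neg''.mpr h1
      have h4 : -(psf c b)⁻¹ = (-(psf c b))⁻¹ := by rw [inv_neg]
      have h5 : (-(psf c b))⁻¹ ≤ L⁻¹ := inv_anti₀ hL (by linarith)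
      linarith [h4 ▸ h5]
  -- assemble
  have key : ‖∫ t in a..b, Complex.exp (Complex.I * (phf c t : ℂ))‖ ≤ 3 / L := by
    rw [hsplit]
    have tri : ‖Ff c b - Ff c a‖ ≤ ‖Ff c b‖ + ‖Ff c a‖ := by
      simpa [sub_eq_add_neg] using norm_add_le (Ff c b) (-(Ff c a))
    calc ‖(Ff c b - Ff c a) + ∫ t in a..b, Gf c t‖
        ≤ ‖Ff c b - Ff c a‖ + ‖∫ t in a..b, Gf c t‖ :=
          norm_add_le _ _
      _ ≤ (‖Ff c b‖ + ‖Ff c a‖) + ((psf c a)⁻¹ - (psf c b)⁻¹) :=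
          add_le_add tri hGint
      _ ≤ (L⁻¹ + L⁻¹) + L⁻¹ :=
          add_le_add (add_le_add (hFbound b hbIcc) (hFbound a haIcc)) hRbound
      _ = 3 / L := by rw [div_eq_mul_inv]; ring
  simpa only [phf] using key

/-- If `n ≤ T` or `n ≥ 4T`, then
`I_n = (1/2πi) ∫_{4παT}^{6παT} e^{i(t log(t/(2πeαn)) - π/4)} dt = O(1)`, with an implied
constant independent of `n`, `α` and `T`. -/
theorem I_n_bounded_off_stationary_range :
    ∃ C : ℝ, ∀ (α T : ℝ) (n : ℕ), 1 ≤ α → 0 < T → 1 ≤ n →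
      ((n : ℝ) ≤ T ∨ 4 * T ≤ (n : ℝ)) →
      ‖(1 / (2 * Real.pi * Complex.I)) *
        ∫ t in (4 * Real.pi * α * T)..(6 * Real.pi * α * T),
          Complex.exp (Complex.I *
            ((t * Real.log (t / (2 * Real.pi * Real.exp 1 * α * n)) - Real.pi / 4 : ℝ) : ℂ))‖ ≤
        C := by
  use 3 / Real.log (4/3)
  intro α T n hα hT hn hcase
  have hπ := Real.pi_pos
  have hn1 : (1:ℝ) ≤ (n:ℝ) := by exact_mod_cast hn
  have hc : (0:ℝ) < 2 * Real.pi * α * n := by positivity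
  have ha : (0:ℝ) < 4 * Real.pi * α * T := by positivity
  have hab : 4 * Real.pi * α * T ≤ 6 * Real.pi * α * T := by nlinarith
  have hrw : (2 * Real.pi * Real.exp 1 * α * (n:ℝ)) = Real.exp 1 * (2 * Real.pi * α * n) := by ring
  rw [hrw]
  have hL : 0 < Real.log (4/3) := Real.log_pos (by norm_num)
  have hsgn : (∀ t ∈ Set.Icc (4 * Real.pi * α * T) (6 * Real.pi * α * T),
        Real.log (4/3) ≤ Real.log (t / (2 * Real.pi * α * n))) ∨
      (∀ t ∈ Set.Icc (4 * Real.pi * α * T) (6 * Real.pi * α * T),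
        Real.log (t / (2 * Real.pi * α * n)) ≤ -Real.log (4/3)) := by
    rcases hcase with h | h
    · left
      intro t ht
      apply Real.log_le_log (by norm_num)
      rw [le_div_iff₀ hc]
      nlinarith [ht.1]
    · right
      intro t ht
      have ht0 : 0 < t := lt_of_lt_of_le ha ht.1
      have h1 : t / (2 * Real.pi * α * n) ≤ 3/4 := by
        rw [div_le_iff₀ hc]
        nlinarith [ht.2]
      calc Real.log (t / (2 * Real.pi * α * n)) ≤ Real.log (3/4) :=
            Real.log_le_log (by positivity) h1
        _ = -Real.log (4/3) := by
            rw [show (3:ℝ)/4 = (4/3)⁻¹ by norm_num, Real.log_inv]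
  have hbound := osc_key_s10 (2 * Real.pi * α * n) (4 * Real.pi * α * T) (6 * Real.pi * α * T)
    hc ha hab hsgn
  rw [norm_mul]
  have habs1 : ‖1 / (2 * Real.pi * Complex.I)‖ ≤ 1 := by
    rw [norm_div, norm_one, norm_mul, norm_mul, Complex.norm_I, Complex.norm_real, Real.norm_eq_abs,
      Complex.norm_two, abs_of_pos hπ, mul_one]
    rw [div_le_one (by positivity)]
    nlinarith [Real.pi_gt_three]
  calc ‖1 / (2 * Real.pi * Complex.I)‖ * ‖_‖
      ≤ 1 * ‖_‖ := by gcongr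
    _ = _ := one_mul _
    _ ≤ 3 / Real.log (4/3) := hbound
end
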